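/- Let (X, μ) be a measure space, let E and B be measurable sets, and let T₁, …, T_N be measurable sets of finite measure. Let λ > 0 and let A, C₀ > 0 satisfy A ≥ 2·C₀. Assume: (i) μ(E ∩ T_k) ≥ A·λ·μ(T_k) for every k; (ii) μ(T_k ∩ B) ≤ C₀·λ·μ(T_k) for every k; and (iii) the sets T₁ \ B, …, T_N \ B are pairwise disjoint. Then μ(E) ≥ (A/2)·λ·Σ_{k=1}^{N} μ(T_k). -/
import Mathlib


open MeasureTheory

/-- the abstract 'bush argument'. If each tube `T k` captures an `Aλ`-fraction
of itself inside `E`, meets `B` in at most a `C₀λ`-fraction of itself, and the tips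
`T k \ B` are pairwise disjoint, then `μ(E) ≥ (A/2)λ Σ_k μ(T k)` (given `A ≥ 2C₀`). -/
theorem stmt_13 {X : Type*} [MeasurableSpace X] (μ : Measure X)
    (E B : Set X) (hE : MeasurableSet E) (hB : MeasurableSet B)
    (N : ℕ) (T : Fin N → Set X) (hT : ∀ k, MeasurableSet (T k))
    (hTfin : ∀ k, μ (T k) < ⊤)
    (lam A C₀ : ℝ) (hlam : 0 < lam) (hC₀ : 0 < C₀) (hA : 2 * C₀ ≤ A)
    (h1 : ∀ k, ENNReal.ofReal (A * lam) * μ (T k) ≤ μ (E ∩ T k))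
    (h2 : ∀ k, μ (T k ∩ B) ≤ ENNReal.ofReal (C₀ * lam) * μ (T k))
    (h3 : Pairwise fun k l => Disjoint (T k \ B) (T l \ B)) :
    ENNReal.ofReal (A / 2 * lam) * ∑ k, μ (T k) ≤ μ E := by
  have hApos : (0:ℝ) < A := lt_of_lt_of_le (by linarith) hA
  have key : ∀ k, ENNReal.ofReal (A / 2 * lam) * μ (T k) ≤ μ (E ∩ (T k \ B)) := by
    intro k
    have hsub : E ∩ T k ⊆ (E ∩ (T k \ B)) ∪ (T k ∩ B) := by
      intro x ⟨hxE, hxT⟩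
      by_cases hxB : x ∈ B
      · exact Or.inr ⟨hxT, hxB⟩
      · exact Or.inl ⟨hxE, hxT, hxB⟩
    have hmeas : μ (E ∩ T k) ≤ μ (E ∩ (T k \ B)) + μ (T k ∩ B) :=
      le_trans (measure_mono hsub) (measure_union_le _ _)
    have hAhalf : A / 2 * lam + C₀ * lam ≤ A * lam := by nlinarith
    have h4 : ENNReal.ofReal (A / 2 * lam) * μ (T k) + ENNReal.ofReal (C₀ * lam) * μ (T k)
        ≤ μ (E ∩ (T k \ B)) + ENNReal.ofReal (C₀ * lam) * μ (T k) := by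
      calc ENNReal.ofReal (A / 2 * lam) * μ (T k) + ENNReal.ofReal (C₀ * lam) * μ (T k)
          = ENNReal.ofReal (A / 2 * lam + C₀ * lam) * μ (T k) := by
            rw [← add_mul, ← ENNReal.ofReal_add (by positivity) (by positivity)]
        _ ≤ ENNReal.ofReal (A * lam) * μ (T k) := by
            exact mul_le_mul_left (ENNReal.ofReal_le_ofReal hAhalf) _
        _ ≤ μ (E ∩ T k) := h1 k
        _ ≤ μ (E ∩ (T k \ B)) + μ (T k ∩ B) := hmeas
        _ ≤ μ (E ∩ (T k \ B)) + ENNReal.ofReal (C₀ * lam) * μ (T k) := by gcongr; exact h2 k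
    have hfin : ENNReal.ofReal (C₀ * lam) * μ (T k) ≠ ⊤ :=
      (ENNReal.mul_lt_top ENNReal.ofReal_lt_top (hTfin k)).ne
    exact (ENNReal.add_le_add_iff_right hfin).mp h4
  calc ENNReal.ofReal (A / 2 * lam) * ∑ k, μ (T k)
      = ∑ k, ENNReal.ofReal (A / 2 * lam) * μ (T k) := Finset.mul_sum _ _ _
    _ ≤ ∑ k, μ (E ∩ (T k \ B)) := Finset.sum_le_sum fun k _ => key k
    _ = μ (⋃ k, E ∩ (T k \ B)) := by
        rw [measure_iUnion (fun i j hij => (h3 hij).mono Set.inter_subset_right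
          Set.inter_subset_right) (fun k => hE.inter ((hT k).diff hB)), tsum_fintype]
    _ ≤ μ E := measure_mono (Set.iUnion_subset fun k => Set.inter_subset_left)
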